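/- Let L be a finitely generated field extension of ℂ equipped with a Poisson bracket {·,·} (a ℂ-bilinear antisymmetric map satisfying the Jacobi identity and the Leibniz rule in each argument). Suppose there exist elements f_1, …, f_m ∈ L such that the Hamiltonian derivations {f_1, ·}, …, {f_m, ·} of L are linearly independent over L. Then the transcendence degree over ℂ of the Poisson center Z(L) = {a ∈ L : {a,b} = 0 for all b ∈ L} is at most trdeg_ℂ(L) - m. -/

import Mathlib

open MvPolynomial Function

private lemma exists_comp_linearIndependent {K : Type*} [Field K] {ι : Type*} :
    ∀ {m : ℕ} (v : Fin m → ι → K), LinearIndependent K v →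
      ∃ t : Fin m → ι, LinearIndependent K fun j => v j ∘ t := by
  intro m
  induction m with
  | zero => exact fun v _ => ⟨Fin.elim0, linearIndependent_empty_type⟩
  | succ m ih =>
    intro v hv
    obtain ⟨t0, ht0⟩ := ih (fun j => v j.castSucc)
      (hv.comp Fin.castSucc (Fin.castSucc_injective m))
    set B : Fin m → (Fin m → K) := fun j => v j.castSucc ∘ t0 with hB
    obtain ⟨a, ha⟩ : ∃ a : Fin m → K, (∑ j, a j • B j) = v (Fin.last m) ∘ t0 := by
      rcases isEmpty_or_nonempty (Fin m) with h | h
      · exact ⟨fun _ => 0, funext fun i => (h.false i).elim⟩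
      · have hspan : Submodule.span K (Set.range B) = ⊤ :=
          ht0.span_eq_top_of_card_eq_finrank (by simp [Module.finrank_pi])
        have hmem : (v (Fin.last m) ∘ t0) ∈ Submodule.span K (Set.range B) := by
          rw [hspan]; trivial
        exact (Submodule.mem_span_range_iff_exists_fun K).mp hmem
    set w : ι → K := v (Fin.last m) - ∑ j, a j • v j.castSucc with hw
    have hw0 : ∀ i, w (t0 i) = 0 := by
      intro i
      have := congrFun ha i
      simp only [Finset.sum_apply, Pi.smul_apply, smul_eq_mul, comp_apply, hB] at this
      simp only [hw, Pi.sub_apply, Finset.sum_apply, Pi.smul_apply, smul_eq_mul]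
      rw [this]; ring
    have hwne : w ≠ 0 := by
      intro h0
      have hc : ∑ j : Fin (m + 1), ((Fin.snoc a (-1 : K) : Fin (m + 1) → K) j) • v j = 0 := by
        rw [Fin.sum_univ_castSucc]
        simp only [Fin.snoc_castSucc, Fin.snoc_last]
        have hve : v (Fin.last m) = ∑ j, a j • v j.castSucc := sub_eq_zero.mp h0
        rw [hve]; module
      have := Fintype.linearIndependent_iff.mp hv _ hc (Fin.last m)
      simp at this
    obtain ⟨x, hx⟩ : ∃ x, w x ≠ 0 := by
      by_contra hcon
      push_neg at hcon
      exact hwne (funext hcon)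
    refine ⟨(Fin.snoc t0 x : Fin (m + 1) → ι), Fintype.linearIndependent_iff.mpr ?_⟩
    intro c hc
    have hc' : ∀ p, ∑ j : Fin (m + 1), c j * v j ((Fin.snoc t0 x : Fin (m + 1) → ι) p) = 0 := by
      intro p
      have := congrFun hc p
      simpa [Finset.sum_apply] using this
    set e : Fin m → K := fun j => c j.castSucc + c (Fin.last m) * a j with he
    have he0 : ∀ j, e j = 0 := by
      have h1 : ∀ i : Fin m, ∑ j : Fin m, e j * v j.castSucc (t0 i) = 0 := by
        intro i
        have h2 := hc' i.castSucc
        rw [show ((Fin.snoc t0 x : Fin (m + 1) → ι) i.castSucc : ι) = t0 i by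
          simp [Fin.snoc_castSucc]] at h2
        rw [Fin.sum_univ_castSucc] at h2
        have hv0 : v (Fin.last m) (t0 i) = ∑ j, a j * v j.castSucc (t0 i) := by
          have h3 := hw0 i
          simp only [hw, Pi.sub_apply, Finset.sum_apply, Pi.smul_apply, smul_eq_mul] at h3
          linear_combination h3
        rw [hv0, Finset.mul_sum] at h2
        rw [← h2, ← Finset.sum_add_distrib]
        exact Finset.sum_congr rfl fun j _ => by simp only [he]; ring
      intro j
      refine Fintype.linearIndependent_iff.mp ht0 e ?_ j
      funext i
      simpa [Finset.sum_apply, hB] using h1 i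
    have hlast : c (Fin.last m) = 0 := by
      have h2 := hc' (Fin.last m)
      rw [show ((Fin.snoc t0 x : Fin (m + 1) → ι) (Fin.last m) : ι) = x by
        simp [Fin.snoc_last]] at h2
      rw [Fin.sum_univ_castSucc] at h2
      have hvx : v (Fin.last m) x = w x + ∑ j, a j * v j.castSucc x := by
        simp only [hw, Pi.sub_apply, Finset.sum_apply, Pi.smul_apply, smul_eq_mul]
        ring
      rw [hvx] at h2
      have hsum : ∑ j : Fin m, e j * v j.castSucc x =
          (∑ j : Fin m, c j.castSucc * v j.castSucc x) +
            c (Fin.last m) * ∑ j, a j * v j.castSucc x := by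
        rw [Finset.mul_sum, ← Finset.sum_add_distrib]
        exact Finset.sum_congr rfl fun j _ => by simp only [he]; ring
      have h3 : (∑ j : Fin m, e j * v j.castSucc x) + c (Fin.last m) * w x = 0 := by
        rw [hsum]; linear_combination h2
      simp only [fun j => he0 j, zero_mul, Finset.sum_const_zero, zero_add] at h3
      exact (mul_eq_zero.mp h3).resolve_right hx
    intro j
    refine Fin.lastCases hlast (fun i => ?_) j
    have := he0 i
    rw [he] at this
    simpa [hlast] using this

private lemma derivation_aeval_eq {R A : Type*} [CommRing R] [CommRing A] [Algebra R A]
    (D : Derivation R A A) {n : ℕ} (x : Fin n → A) (P : MvPolynomial (Fin n) R) :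
    D (aeval x P) = ∑ i, aeval x (pderiv i P) * D (x i) := by
  induction P using MvPolynomial.induction_on with
  | C a => simp
  | add p q hp hq =>
    simp only [map_add, hp, hq, add_mul, Finset.sum_add_distrib]
  | mul_X p i hp =>
    rw [map_mul, aeval_X, Derivation.leibniz, smul_eq_mul, smul_eq_mul, hp]
    have hrhs : ∀ j : Fin n, aeval x (pderiv j (p * X i)) * D (x j) =
        aeval x (pderiv j p) * x i * D (x j) +
          aeval x p * aeval x (pderiv j (X i : MvPolynomial (Fin n) R)) * D (x j) := by
      intro j
      rw [pderiv_mul, map_add, map_mul, map_mul, aeval_X, add_mul]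
    rw [Finset.sum_congr rfl fun j _ => hrhs j, Finset.sum_add_distrib]
    have h1 : ∑ j : Fin n, aeval x p * aeval x (pderiv j (X i : MvPolynomial (Fin n) R)) *
        D (x j) = aeval x p * D (x i) := by
      rw [Finset.sum_eq_single i]
      · simp [pderiv_X_self]
      · intro b _ hb
        rw [pderiv_X_of_ne (Ne.symm hb)]
        simp
      · simp
    have h2 : ∑ j : Fin n, aeval x (pderiv j p) * x i * D (x j) =
        x i * ∑ j : Fin n, aeval x (pderiv j p) * D (x j) := by
      rw [Finset.mul_sum]
      exact Finset.sum_congr rfl fun j _ => by ring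
    rw [h1, h2]; ring

private lemma totalDegree_pderiv_le' {R : Type*} [CommRing R] {σ : Type*} [DecidableEq σ]
    (P : MvPolynomial σ R) (i : σ) {n : ℕ} (h : P.totalDegree ≤ n + 1) :
    (pderiv i P).totalDegree ≤ n := by
  conv_lhs => rw [P.as_sum]
  rw [map_sum]
  refine le_trans (totalDegree_finset_sum _ _) (Finset.sup_le fun s hs => ?_)
  rw [pderiv_monomial]
  rcases Nat.eq_zero_or_pos (s i) with h0 | h0
  · simp [h0]
  · refine le_trans (totalDegree_monomial_le _ _) ?_
    have hle : Finsupp.single i 1 ≤ s := by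
      rw [Finsupp.single_le_iff]; exact h0
    have hsum : ((s - Finsupp.single i 1).sum fun _ => (id : ℕ → ℕ)) + 1 =
        s.sum fun _ => (id : ℕ → ℕ) := by
      have hts : (s - Finsupp.single i 1) + Finsupp.single i 1 = s := tsub_add_cancel_of_le hle
      calc ((s - Finsupp.single i 1).sum fun _ => (id : ℕ → ℕ)) + 1
          = ((s - Finsupp.single i 1).sum fun _ => (id : ℕ → ℕ)) +
            ((Finsupp.single i 1).sum fun _ => (id : ℕ → ℕ)) := by
            rw [Finsupp.sum_single_index rfl]; rfl
        _ = s.sum fun _ => (id : ℕ → ℕ) := by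
            rw [← Finsupp.sum_add_index' (fun _ => rfl) fun _ _ _ => rfl, hts]
    have hstot : (s.sum fun _ => (id : ℕ → ℕ)) ≤ n + 1 := by
      refine le_trans ?_ h
      exact le_totalDegree hs
    omega

private lemma eq_C_of_pderiv_eq_zero {R : Type*} [CommRing R] [CharZero R] [NoZeroDivisors R]
    {σ : Type*} [DecidableEq σ] (P : MvPolynomial σ R) (h : ∀ i, pderiv i P = 0) :
    P = C (P.coeff 0) := by
  have key : ∀ s, P.coeff s ≠ 0 → s = 0 := by
    intro s hs
    by_contra hne
    obtain ⟨i, hi⟩ : ∃ i, s i ≠ 0 := by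
      by_contra hcon; push_neg at hcon
      exact hne (Finsupp.ext hcon)
    have hsupp : s ∈ P.support := mem_support_iff.mpr hs
    have hrw : pderiv i P =
        ∑ u ∈ P.support, monomial (u - Finsupp.single i 1) (P.coeff u * (u i : R)) := by
      conv_lhs => rw [P.as_sum]
      rw [map_sum]
      exact Finset.sum_congr rfl fun u _ => pderiv_monomial
    have hco : (pderiv i P).coeff (s - Finsupp.single i 1) = P.coeff s * (s i : R) := by
      rw [hrw, coeff_sum, Finset.sum_eq_single s]
      · rw [coeff_monomial, if_pos rfl]
      · intro u hu hus
        rw [coeff_monomial]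
        rcases Nat.eq_zero_or_pos (u i) with h0 | h0
        · simp [h0]
        · rw [if_neg]
          intro heq
          apply hus
          have hleu : Finsupp.single i 1 ≤ u := Finsupp.single_le_iff.mpr h0
          have hles : Finsupp.single i 1 ≤ s := Finsupp.single_le_iff.mpr (Nat.pos_of_ne_zero hi)
          calc u = u - Finsupp.single i 1 + Finsupp.single i 1 := (tsub_add_cancel_of_le hleu).symm
            _ = s - Finsupp.single i 1 + Finsupp.single i 1 := by rw [heq]
            _ = s := tsub_add_cancel_of_le hles
      · intro hns; exact absurd hsupp hns
    rw [h i] at hco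
    simp only [coeff_zero] at hco
    exact (mul_ne_zero hs (Nat.cast_ne_zero.mpr hi)) hco.symm
  ext s
  rcases eq_or_ne s 0 with rfl | hne
  · simp
  · rw [coeff_C, if_neg (Ne.symm hne)]
    by_contra hco
    exact hne (key s hco)

private lemma key_algInd {K A : Type*} [Field K] [CharZero K] [Field A] [Algebra K A]
    {m : ℕ} (D : Fin m → Derivation K A A) (x : Fin m → A)
    (hind : LinearIndependent A fun j => fun i => D j (x i)) :
    AlgebraicIndependent K x := by
  -- solving linear systems with the rows (D j (x i))ᵢ
  have usolve : ∀ u : Fin m → A, (∀ j, ∑ i, u i * D j (x i) = 0) → ∀ i, u i = 0 := by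
    intro u hu i
    rcases isEmpty_or_nonempty (Fin m) with he | hne
    · exact (he.false i).elim
    have hspan : Submodule.span A (Set.range fun j => fun i => D j (x i)) = ⊤ :=
      hind.span_eq_top_of_card_eq_finrank (by simp [Module.finrank_pi])
    set φ : (Fin m → A) →ₗ[A] A := ∑ i, u i • LinearMap.proj i with hφ
    have hφr : ∀ j, φ (fun i => D j (x i)) = 0 := by
      intro j
      rw [hφ]
      simp only [LinearMap.sum_apply, LinearMap.smul_apply, LinearMap.proj_apply,
        smul_eq_mul]
      exact hu j
    have hφ0 : φ = (0 : (Fin m → A) →ₗ[A] A) := by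
      refine LinearMap.ext_on hspan ?_
      rintro _ ⟨j, rfl⟩
      simpa using hφr j
    have := congrArg (fun ψ : (Fin m → A) →ₗ[A] A => ψ (Pi.single i 1)) hφ0
    simp only [hφ, LinearMap.sum_apply, LinearMap.smul_apply, LinearMap.proj_apply,
      smul_eq_mul, LinearMap.zero_apply] at this
    rw [Finset.sum_eq_single i (fun b _ hb => by simp [Pi.single_eq_of_ne hb]) (by simp)]
      at this
    simpa using this
  have H : ∀ (n : ℕ) (P : MvPolynomial (Fin m) K), P.totalDegree ≤ n → aeval x P = 0 →
      P = 0 := by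
    intro n
    induction n with
    | zero =>
      intro P hdeg hev
      have hC : P = C (P.coeff 0) := by
        ext s
        rcases eq_or_ne s 0 with rfl | hne
        · simp
        · rw [coeff_C, if_neg (Ne.symm hne)]
          by_contra hco
          have hsupp : s ∈ P.support := mem_support_iff.mpr hco
          have := (totalDegree_eq_zero_iff _ P).mp (Nat.le_zero.mp hdeg) s hsupp
          exact hne (Finsupp.ext this)
      rw [hC, aeval_C] at hev
      have : P.coeff 0 = 0 := (algebraMap K A).injective (by rw [hev, map_zero])
      rw [hC, this, map_zero]
    | succ n ihn =>
      intro P hdeg hev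
      have hu : ∀ i, aeval x (pderiv i P) = 0 := by
        refine usolve _ fun j => ?_
        have := derivation_aeval_eq (D j) x P
        rw [hev, map_zero] at this
        exact this.symm
      have hP0 : ∀ i, pderiv i P = 0 := fun i =>
        ihn _ (totalDegree_pderiv_le' P i hdeg) (hu i)
      have hC := eq_C_of_pderiv_eq_zero P hP0
      rw [hC, aeval_C] at hev
      have : P.coeff 0 = 0 := (algebraMap K A).injective (by rw [hev, map_zero])
      rw [hC, this, map_zero]
  exact (injective_iff_map_eq_zero (aeval x : MvPolynomial (Fin m) K →ₐ[K] A)).mpr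
    fun P hP => H P.totalDegree P le_rfl hP

private lemma algInd_sum {k K A : Type*} [Field k] [Field K] [Field A]
    [Algebra k K] [Algebra k A] [Algebra K A] [IsScalarTower k K A]
    {ι κ : Type*} (x : ι → A) (y : κ → K)
    (hx : AlgebraicIndependent K x) (hy : AlgebraicIndependent k y) :
    AlgebraicIndependent k (Sum.elim x fun j => algebraMap K A (y j)) := by
  have hfac : (aeval (Sum.elim x fun j => algebraMap K A (y j)) :
      MvPolynomial (ι ⊕ κ) k →ₐ[k] A) =
      (((aeval x : MvPolynomial ι K →ₐ[K] A).restrictScalars k).comp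
        ((mapAlgHom (aeval y : MvPolynomial κ k →ₐ[k] K)).comp
          (sumAlgEquiv k ι κ).toAlgHom)) := by
    apply algHom_ext
    rintro (i | j) <;>
      simp [sumAlgEquiv_X_inl, sumAlgEquiv_X_inr, mapAlgHom_apply, aeval_X, aeval_C,
        map_C]
  rw [AlgebraicIndependent] at hx hy ⊢
  rw [hfac]
  simp only [AlgHom.coe_comp, AlgHom.coe_restrictScalars', AlgEquiv.toAlgHom_eq_coe,
    AlgHom.coe_coe]
  exact hx.comp ((by
    have : ⇑(mapAlgHom (σ := ι) (aeval y : MvPolynomial κ k →ₐ[k] K)) =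
        ⇑(MvPolynomial.map (aeval y : MvPolynomial κ k →ₐ[k] K).toRingHom) := rfl
    rw [this]
    exact (MvPolynomial.map_injective _ hy).comp (sumAlgEquiv k ι κ).injective :
      Function.Injective (⇑(mapAlgHom (aeval y : MvPolynomial κ k →ₐ[k] K)) ∘
        ⇑(sumAlgEquiv k ι κ))))

/-- Transcendence degree of an `R`-algebra `A`: the supremum of cardinalities of
algebraically independent subsets of `A` over `R`. -/
noncomputable def trdeg (R A : Type*) [CommRing R] [CommRing A] [Algebra R A] : Cardinal :=
  ⨆ s : { s : Set A // AlgebraicIndependent R ((↑) : s → A) }, Cardinal.mk s.1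

/-- Let `L` be a finitely generated field extension of `ℂ` with a Poisson bracket
(ℂ-bilinear, antisymmetric, Jacobi, Leibniz).  If there are `f_1, …, f_m ∈ L` whose
Hamiltonian derivations `{f_j, ·}` are linearly independent over `L`, then the
transcendence degree over `ℂ` of the Poisson center of `L` is at most
`trdeg_ℂ L - m`. -/
theorem stmt7 (L : Type*) [Field L] [Algebra ℂ L]
    (hfg : (⊤ : IntermediateField ℂ L).FG)
    (br : L →ₗ[ℂ] L →ₗ[ℂ] L)
    (hanti : ∀ a b : L, br a b = - br b a)
    (hjac : ∀ a b c : L, br a (br b c) + br b (br c a) + br c (br a b) = 0)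
    (hleib : ∀ a b c : L, br a (b * c) = br a b * c + b * br a c)
    (m : ℕ) (f : Fin m → L)
    (hham : LinearIndependent L (fun j : Fin m => br (f j)))
    (F : IntermediateField ℂ L)
    (hF : (F : Set L) = {a : L | ∀ b : L, br a b = 0}) :
    trdeg ℂ F + (m : Cardinal) ≤ trdeg ℂ L := by
  classical
  haveI : CharZero F := charZero_of_injective_algebraMap (algebraMap ℂ F).injective
  -- elements of F are Poisson central
  have hcen : ∀ c : L, c ∈ F → ∀ b : L, br c b = 0 := by
    intro c hc b
    have hc' : c ∈ (F : Set L) := hc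
    rw [hF] at hc'
    exact hc' b
  have hbr1 : ∀ a : L, br a (1 : L) = 0 := by
    intro a
    have h := hleib a 1 1
    rw [mul_one, mul_one, one_mul] at h
    exact (left_eq_add.mp h)
  have hkill : ∀ (j : Fin m) (c : L), c ∈ F → br (f j) c = 0 := by
    intro j c hc
    rw [hanti, hcen c hc (f j), neg_zero]
  -- the Hamiltonian derivations as derivations over F
  let D : Fin m → Derivation F L L := fun j =>
    { toFun := fun y => br (f j) y
      map_add' := fun a b => map_add _ a b
      map_smul' := by
        intro c y
        simp only [RingHom.id_apply]
        rw [Algebra.smul_def, Algebra.smul_def, hleib (f j) _ y,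
          hkill j _ (by rw [IntermediateField.algebraMap_apply]; exact c.2), zero_mul, zero_add]
      map_one_eq_zero' := hbr1 (f j)
      leibniz' := by
        intro a b
        simp only [LinearMap.coe_mk, AddHom.coe_mk, smul_eq_mul]
        rw [hleib]; ring }
  -- pick points where the derivations are pointwise independent
  let coeFn : (L →ₗ[ℂ] L) →ₗ[L] (L → L) :=
    { toFun := fun g => ⇑g
      map_add' := fun _ _ => rfl
      map_smul' := fun _ _ => rfl }
  have hker : LinearMap.ker coeFn = ⊥ := by
    rw [LinearMap.ker_eq_bot']
    intro g hg
    ext z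
    exact congrFun hg z
  have hfun : LinearIndependent L fun j => coeFn (br (f j)) := hham.map' coeFn hker
  obtain ⟨t, ht⟩ := exists_comp_linearIndependent _ hfun
  have halgind : AlgebraicIndependent F t :=
    key_algInd D t (by exact ht)
  -- main bound for each algebraically independent subset of F
  have hbound : ∀ p : {s : Set F // AlgebraicIndependent ℂ ((↑) : s → F)},
      Cardinal.mk p.1 + (m : Cardinal) ≤ trdeg ℂ L := by
    rintro ⟨s, hs⟩
    have halg : AlgebraicIndependent ℂ (Sum.elim t fun j : s => algebraMap F L (j : F)) :=
      algInd_sum t ((↑) : s → F) halgind hs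
    have hinj : Injective (Sum.elim t fun j : s => algebraMap F L (j : F)) :=
      halg.injective
    have hsub : AlgebraicIndependent ℂ
        ((↑) : Set.range (Sum.elim t fun j : s => algebraMap F L (j : F)) → L) :=
      halg.to_subtype_range
    have hle : Cardinal.mk (Set.range (Sum.elim t fun j : s => algebraMap F L (j : F))) ≤
        trdeg ℂ L :=
      le_ciSup (Cardinal.bddAbove_range _)
        (⟨Set.range (Sum.elim t fun j : s => algebraMap F L (j : F)), hsub⟩ :
          {u : Set L // AlgebraicIndependent ℂ ((↑) : u → L)})
    have hcard : Cardinal.mk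
        (Set.range (Sum.elim t fun j : s => algebraMap F L (j : F))) =
        Cardinal.mk s + (m : Cardinal) := by
      rw [Cardinal.mk_range_eq _ hinj, Cardinal.mk_sum]
      simp [add_comm]
    rwa [hcard] at hle
  -- nonempty index type
  haveI hne : Nonempty {s : Set F // AlgebraicIndependent ℂ ((↑) : s → F)} :=
    ⟨⟨∅, algebraicIndependent_empty⟩⟩
  have hmT : (m : Cardinal) ≤ trdeg ℂ L := by
    have := hbound ⟨∅, algebraicIndependent_empty⟩
    simpa using this
  have hcT : trdeg ℂ F ≤ trdeg ℂ L :=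
    ciSup_le fun p => le_trans (self_le_add_right _ _) (hbound p)
  by_contra hlt
  push_neg at hlt
  rcases le_or_gt Cardinal.aleph0 (trdeg ℂ L) with hTinf | hTfin
  · have : trdeg ℂ F + (m : Cardinal) ≤ trdeg ℂ L := by
      calc trdeg ℂ F + (m : Cardinal) ≤ trdeg ℂ L + trdeg ℂ L :=
            add_le_add hcT (le_trans (le_of_lt (Cardinal.nat_lt_aleph0 m)) hTinf)
        _ = trdeg ℂ L := Cardinal.add_eq_self hTinf
    exact absurd this (not_le.mpr hlt)
  · obtain ⟨nT, hnT⟩ := Cardinal.lt_aleph0.mp hTfin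
    have hcfin : trdeg ℂ F < Cardinal.aleph0 := lt_of_le_of_lt hcT hTfin
    obtain ⟨nc, hnc⟩ := Cardinal.lt_aleph0.mp hcfin
    have hm_le : m ≤ nT := by
      rw [hnT] at hmT
      exact_mod_cast hmT
    have h1 : nT < nc + m := by
      rw [hnT, hnc] at hlt
      exact_mod_cast hlt
    have hnc_pos : 0 < nc := by omega
    have h2 : ((nc - 1 : ℕ) : Cardinal) < trdeg ℂ F := by
      rw [hnc]
      exact_mod_cast Nat.sub_lt hnc_pos one_pos
    obtain ⟨p, hp⟩ := exists_lt_of_lt_ciSup h2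
    have h3 : (nc : Cardinal) ≤ Cardinal.mk p.1 := by
      have hsucc := Order.succ_le_of_lt hp
      rwa [← Cardinal.nat_succ, show (nc - 1).succ = nc by omega] at hsucc
    have h4 := hbound p
    have h5 : (nc : Cardinal) + (m : Cardinal) ≤ (nT : Cardinal) := by
      rw [← hnT]
      exact le_trans (add_le_add_left h3 _) h4
    have : nc + m ≤ nT := by exact_mod_cast h5
    omega
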